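/- Fix 0 < p < 1 and set β = √(2p/(2−p)), α = p/(2−p), and h(z) = 1 + βz + αz². Then h has no zeros in the closed unit disc, and if w is the analytic function on 𝔻 with exp(w) = h and w(0) = 0, then the function f = (1 − p/2)^{2/p} · exp((2/p)·w) satisfies ‖f‖_{H^p} = 1 and a_2(f) = (2/p)·(1 − p/2)^{2/p − 1}. -/

import Mathlib

open Metric Filter MeasureTheory

/-- The `H^p` norm of a function on the unit disc:
`(sup_{0<r<1} (2π)⁻¹ ∫₀^{2π} |f(r e^{iθ})|^p dθ)^{1/p}`. -/
noncomputable def hpNorm (p : ℝ) (f : ℂ → ℂ) : ℝ :=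
  (sSup {x : ℝ | ∃ r : ℝ, 0 < r ∧ r < 1 ∧
    x = (2 * Real.pi)⁻¹ * ∫ θ in (0:ℝ)..(2 * Real.pi),
      ‖f (r * Complex.exp (θ * Complex.I))‖ ^ p}) ^ (1 / p)

/-- The `n`-th Taylor coefficient of `f` at the origin: `a_n = f⁽ⁿ⁾(0)/n!`. -/
noncomputable def taylorCoeff (f : ℂ → ℂ) (n : ℕ) : ℂ :=
  iteratedDeriv n f 0 / n.factorial

set_option maxHeartbeats 1600000 in
theorem C2p_extremal_function (p : ℝ) (hp0 : 0 < p) (hp1 : p < 1)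
    (β α : ℝ) (hβ : β = Real.sqrt (2 * p / (2 - p))) (hα : α = p / (2 - p))
    (h : ℂ → ℂ) (hh : ∀ z : ℂ, h z = 1 + (β : ℂ) * z + (α : ℂ) * z ^ 2) :
    (∀ z : ℂ, ‖z‖ ≤ 1 → h z ≠ 0) ∧
    ∀ w : ℂ → ℂ, AnalyticOn ℂ w (ball (0:ℂ) 1) → w 0 = 0 →
      (∀ z ∈ ball (0:ℂ) 1, Complex.exp (w z) = h z) →
      ∀ f : ℂ → ℂ,
        (∀ z ∈ ball (0:ℂ) 1,
          f z = (((1 - p / 2) ^ (2 / p) : ℝ) : ℂ) * Complex.exp (((2 / p : ℝ) : ℂ) * w z)) →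
        hpNorm p f = 1 ∧
          taylorCoeff f 2 = (((2 / p) * (1 - p / 2) ^ (2 / p - 1) : ℝ) : ℂ) := by
  have hnz : ∀ z : ℂ, ‖z‖ ≤ 1 → h z ≠ 0 := by
      have hp2 : 0 < 2 - p := by linarith
      have hα0 : 0 < α := by rw [hα]; positivity
      have hα1 : α < 1 := by rw [hα, div_lt_one hp2]; linarith
      have hβ0 : 0 < β := by rw [hβ]; positivity
      have hβsq : β ^ 2 = 2 * α := by
        rw [hβ, Real.sq_sqrt (by positivity), hα]; ring
      intro z hz
      set z₁ : ℂ := ⟨-(1/β), 1/β⟩ with hz₁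
      set z₂ : ℂ := ⟨-(1/β), -(1/β)⟩ with hz₂
      have hns : Complex.normSq z₁ = 1 / α := by
        rw [hz₁, Complex.normSq_mk]
        have : β^2 ≠ 0 := by positivity
        field_simp
        nlinarith [hβsq]
      have habs1 : 1 < ‖z₁‖ := by
        have h2 : (‖z₁‖)^2 = 1/α := by rw [Complex.sq_norm]; exact hns
        nlinarith [norm_nonneg z₁, one_lt_one_div hα0 hα1]
      have hβC : (β:ℂ)^2 = 2*(α:ℂ) := by exact_mod_cast congrArg (Complex.ofReal ·) hβsq
      have hαne : (α:ℂ) ≠ 0 := by exact_mod_cast hα0.ne'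
      have hβne : (β:ℂ) ≠ 0 := by exact_mod_cast hβ0.ne'
      have hfac : h z = α * (z - z₁) * (z - z₂) := by
        rw [hh]
        have h1 : z₁ = (↑(-(1/β)) : ℂ) + (↑(1/β) : ℂ) * Complex.I := by
          rw [hz₁, Complex.mk_eq_add_mul_I]
        have h2 : z₂ = (↑(-(1/β)) : ℂ) + (↑(-(1/β)) : ℂ) * Complex.I := by
          rw [hz₂, Complex.mk_eq_add_mul_I]
        rw [h1, h2]
        push_cast
        field_simp
        linear_combination (1 - 2*(α:ℂ)*z^2 + (β:ℂ)*z - (α:ℂ)*(β:ℂ)*z + (-(z^2) - (β:ℂ)*z/2)*((β:ℂ)^2 - 2*(α:ℂ))) * hβC + (-(α:ℂ)^2) * Complex.I_sq + ((β:ℂ)^2*z^2 + (β:ℂ)^3*z/2) * hβC + ((α:ℂ) + (α:ℂ)^2) * Complex.I_sq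
      rw [hfac]
      have hne1 : z ≠ z₁ := fun e => absurd hz (by rw [e]; linarith)
      have hne2 : z ≠ z₂ := by
        intro e
        have : ‖z₂‖ = ‖z₁‖ := by
          have : z₂ = starRingEnd ℂ z₁ := by rw [hz₁, hz₂]; rfl
          rw [this, Complex.norm_conj]
        rw [e, this] at hz; linarith
      exact mul_ne_zero (mul_ne_zero hαne (sub_ne_zero.mpr hne1)) (sub_ne_zero.mpr hne2)
  refine ⟨hnz, ?_⟩
  intro w hw hw0 hew f hf
  constructor
  · have hp2 : 0 < 2 - p := by linarith
    have hcpos : (0:ℝ) < 1 - p / 2 := by linarith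
    have hα0 : 0 < α := by rw [hα]; positivity
    have hβsq : β ^ 2 = 2 * α := by
      rw [hβ, Real.sq_sqrt (by positivity), hα]; ring
    have hβ0 : 0 ≤ β := by rw [hβ]; positivity
    set K : ℝ := (1 - p/2)^(2:ℕ) with hK
    have hK0 : 0 < K := by positivity
    have hK1 : K * (1 + β^2 + α^2) = 1 := by
      rw [hK, hβsq, hα]
      field_simp
      ring
    -- pointwise |f z|^p for z in ball
    have hptwise : ∀ z ∈ ball (0:ℂ) 1,
        ‖f z‖ ^ p = K * Complex.normSq (h z) := by
      intro z hzb
      rw [hK]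
      have habs : ‖f z‖ = (1 - p / 2) ^ (2 / p) * Real.exp ((2/p) * (w z).re) := by
        rw [hf z hzb, norm_mul, Complex.norm_exp, Complex.norm_real, Real.norm_eq_abs,
          abs_of_pos (Real.rpow_pos_of_pos hcpos _)]
        norm_num [Complex.re_ofReal_mul]
      rw [habs, Real.mul_rpow (Real.rpow_pos_of_pos hcpos _).le (Real.exp_pos _).le,
        ← Real.rpow_natCast (1-p/2) 2, ← Real.rpow_mul hcpos.le]
      rw [← Real.exp_mul]
      have he : Real.exp (2 / p * (w z).re * p) = Complex.normSq (h z) := by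
        have h1 : (2 / p) * (w z).re * p = 2 * (w z).re := by field_simp
        rw [h1, ← hew z hzb, Complex.normSq_eq_norm_sq, Complex.norm_exp, sq, ← Real.exp_add]
        ring_nf
      rw [he]
      have h2p : 2/p*p = ((2:ℕ):ℝ) := by field_simp; norm_num
      rw [h2p]
    -- normSq formula
    have hnsq : ∀ (r θ : ℝ), Complex.normSq (h (r * Complex.exp (θ * Complex.I)))
        = (1 + β^2*r^2 + α^2*r^4 - 2*α*r^2) + (2*β*r + 2*α*β*r^3) * Real.cos θ
          + (4*α*r^2) * Real.cos θ ^ 2 := by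
      intro r θ
      have hz : ((r:ℂ) * Complex.exp (θ * Complex.I))
          = Complex.ofReal (r * Real.cos θ) + Complex.ofReal (r * Real.sin θ) * Complex.I := by
        rw [Complex.exp_mul_I, ← Complex.ofReal_cos, ← Complex.ofReal_sin]
        push_cast
        ring
      have hX : h ((r:ℂ) * Complex.exp (θ * Complex.I))
          = Complex.ofReal (1 + β*(r*Real.cos θ) + α*((r*Real.cos θ)^2 - (r*Real.sin θ)^2))
            + Complex.ofReal (β*(r*Real.sin θ) + 2*α*(r*Real.cos θ)*(r*Real.sin θ)) * Complex.I := by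
        rw [hh, hz]
        push_cast [Complex.ofReal_sin, Complex.ofReal_cos]
        linear_combination ((α:ℂ)*((r:ℝ):ℂ)^2*(Complex.sin (θ:ℂ))^2) * Complex.I_sq
      rw [hX, Complex.normSq_add_mul_I]
      have hsc : Real.sin θ^2 + Real.cos θ^2 = 1 := Real.sin_sq_add_cos_sq θ
      set cc := Real.cos θ
      set ss := Real.sin θ
      linear_combination ((β*r+2*α*r^2*cc)^2 - 2*(1+β*r*cc+α*r^2*cc^2)*α*r^2 + α^2*r^4*(ss^2+1-cc^2)) * hsc
    -- integral value for each r
    have hint : ∀ r : ℝ, 0 < r → r < 1 →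
        ((2 * Real.pi)⁻¹ * ∫ θ in (0:ℝ)..(2 * Real.pi),
          ‖f (r * Complex.exp (θ * Complex.I))‖ ^ p)
        = K * (1 + β^2*r^2 + α^2*r^4) := by
      intro r hr0 hr1
      have hmem : ∀ θ : ℝ, ((r:ℂ) * Complex.exp (θ * Complex.I)) ∈ ball (0:ℂ) 1 := by
        intro θ
        simp only [mem_ball, dist_zero_right, norm_mul, Complex.norm_real]
        rw [Complex.norm_exp]
        simp [Complex.re_ofReal_mul, abs_of_pos hr0]
        exact hr1
      have hcongr : (∫ θ in (0:ℝ)..(2 * Real.pi),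
          ‖f (r * Complex.exp (θ * Complex.I))‖ ^ p)
          = ∫ θ in (0:ℝ)..(2 * Real.pi),
            (K * (1 + β^2*r^2 + α^2*r^4 - 2*α*r^2) + (K*(2*β*r + 2*α*β*r^3)) * Real.cos θ
              + (K*(4*α*r^2)) * Real.cos θ ^ 2) := by
        apply intervalIntegral.integral_congr
        intro θ _
        dsimp only
        rw [hptwise _ (hmem θ), hnsq r θ]
        ring
      rw [hcongr]
      have h1 : IntervalIntegrable (fun _ : ℝ => K * (1 + β^2*r^2 + α^2*r^4 - 2*α*r^2)) volume 0 (2*Real.pi) :=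
        intervalIntegrable_const
      have h2 : IntervalIntegrable (fun θ : ℝ => (K*(2*β*r + 2*α*β*r^3)) * Real.cos θ) volume 0 (2*Real.pi) :=
        (continuous_const.mul Real.continuous_cos).intervalIntegrable _ _
      have h3 : IntervalIntegrable (fun θ : ℝ => (K*(4*α*r^2)) * Real.cos θ ^ 2) volume 0 (2*Real.pi) :=
        (continuous_const.mul (Real.continuous_cos.pow 2)).intervalIntegrable _ _
      rw [intervalIntegral.integral_add (h1.add h2) h3, intervalIntegral.integral_add h1 h2,
        intervalIntegral.integral_const, intervalIntegral.integral_const_mul,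
        intervalIntegral.integral_const_mul, integral_cos, integral_cos_sq]
      have hpi : Real.pi ≠ 0 := Real.pi_ne_zero
      rw [Real.sin_two_pi, Real.cos_two_pi, Real.sin_zero]
      field_simp
      ring
    -- the sup set
    set S := {x : ℝ | ∃ r : ℝ, 0 < r ∧ r < 1 ∧
      x = (2 * Real.pi)⁻¹ * ∫ θ in (0:ℝ)..(2 * Real.pi),
        ‖f (r * Complex.exp (θ * Complex.I))‖ ^ p} with hS
    have hub : ∀ x ∈ S, x ≤ 1 := by
      rintro x ⟨r, hr0, hr1, rfl⟩
      rw [hint r hr0 hr1]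
      have hr2 : r^2 ≤ 1 := by nlinarith
      have hr4 : r^4 ≤ 1 := by nlinarith [sq_nonneg r]
      nlinarith [hK1, hK0.le,
        mul_nonneg (mul_nonneg hK0.le (sq_nonneg β)) (by linarith : (0:ℝ) ≤ 1 - r^2),
        mul_nonneg (mul_nonneg hK0.le (sq_nonneg α)) (by linarith : (0:ℝ) ≤ 1 - r^4)]
    have hne : S.Nonempty := by
      refine ⟨_, 1/2, by norm_num, by norm_num, rfl⟩
    have hbdd : BddAbove S := ⟨1, hub⟩
    have hsup : sSup S = 1 := by
      apply le_antisymm (csSup_le hne hub)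
      apply le_of_forall_lt
      intro c hc
      set t := max c (1/2) with ht
      have ht1 : t < 1 := by
        rw [ht]; exact max_lt hc (by norm_num)
      have ht0 : (0:ℝ) < t := lt_of_lt_of_le (by norm_num) (le_max_right _ _)
      set r := t ^ ((4:ℝ)⁻¹) with hr
      have hr0 : 0 < r := Real.rpow_pos_of_pos ht0 _
      have hr1 : r < 1 := Real.rpow_lt_one ht0.le ht1 (by norm_num)
      have hr4 : r^(4:ℕ) = t := by
        rw [hr, ← Real.rpow_natCast (t ^ ((4:ℝ)⁻¹)) 4, ← Real.rpow_mul ht0.le]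
        norm_num
      clear_value r
      clear hr
      have hxS : K * (1 + β^2*r^2 + α^2*r^4) ∈ S := ⟨r, hr0, hr1, (hint r hr0 hr1).symm⟩
      have hcx : c < K * (1 + β^2*r^2 + α^2*r^4) := by
        have hct : c ≤ t := le_max_left _ _
        have hr2 : r^2 ≤ 1 := by nlinarith
        have hr4le : r^4 < 1 := by nlinarith [sq_nonneg r, sq_nonneg (r^2)]
        have key : K*(1+β^2+α^2)*r^4 = r^4 := by rw [hK1]; ring
        nlinarith [key, hr4, hct, mul_pos hK0 (by linarith : (0:ℝ) < 1 - r^4),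
          mul_nonneg (mul_nonneg hK0.le (sq_nonneg β)) (by nlinarith [sq_nonneg r] : (0:ℝ) ≤ r^2 - r^4)]
      exact lt_of_lt_of_le hcx (le_csSup hbdd hxS)
    rw [hpNorm, ← hS, hsup, Real.one_rpow]
  · have hp2 : 0 < 2 - p := by linarith
    have hβsq : β ^ 2 = 2 * α := by
      rw [hβ, Real.sq_sqrt (by positivity), hα]; ring
    have hβC : (β:ℂ)^2 = 2*(α:ℂ) := by exact_mod_cast congrArg (Complex.ofReal ·) hβsq
    set c : ℂ := (((1 - p / 2) ^ (2 / p) : ℝ) : ℂ) with hc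
    set k : ℂ := ((2 / p : ℝ) : ℂ) with hk
    have h0mem : (0:ℂ) ∈ ball (0:ℂ) 1 := by simp
    have hne : ∀ z ∈ ball (0:ℂ) 1, h z ≠ 0 := fun z hz =>
      hnz z (le_of_lt (by simpa [Metric.mem_ball] using hz))
    -- derivative of w on the ball
    have hdw : ∀ z ∈ ball (0:ℂ) 1, HasDerivAt w (deriv w z) z := by
      intro z hz
      exact ((hw z hz).differentiableWithinAt.differentiableAt (mem_nhds_iff.mpr ⟨_, Set.subset_insert _ _, isOpen_ball, hz⟩)).hasDerivAt
    -- polynomial derivative of h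
    have hpoly : ∀ z : ℂ, HasDerivAt h ((β:ℂ) + (α:ℂ) * (2 * z)) z := by
      intro z
      have hfun : h = fun z : ℂ => 1 + (β:ℂ) * z + (α:ℂ) * z ^ 2 := funext hh
      rw [hfun]
      have h1 : HasDerivAt (fun z : ℂ => 1 + (β:ℂ) * z + (α:ℂ) * z ^ 2)
          (0 + (β:ℂ) * 1 + (α:ℂ) * (2 * z ^ 1)) z := by
        exact ((hasDerivAt_const z (1:ℂ)).add ((hasDerivAt_id z).const_mul (β:ℂ))).add
          ((hasDerivAt_pow 2 z).const_mul (α:ℂ))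
      simpa using h1
    have hkey : ∀ z ∈ ball (0:ℂ) 1, h z * deriv w z = (β:ℂ) + (α:ℂ) * (2 * z) := by
      intro z hz
      have hev : (fun t => Complex.exp (w t)) =ᶠ[nhds z] h := by
        filter_upwards [isOpen_ball.mem_nhds hz] with t ht using hew t ht
      have h1 : HasDerivAt (fun t => Complex.exp (w t)) (Complex.exp (w z) * deriv w z) z :=
        (hdw z hz).cexp
      have h2 : HasDerivAt (fun t => Complex.exp (w t)) ((β:ℂ) + (α:ℂ) * (2 * z)) z :=
        (hpoly z).congr_of_eventuallyEq hev
      have := h1.unique h2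
      rw [← this, hew z hz]
    have hdw0 : HasDerivAt w (β:ℂ) 0 := by
      have := hkey 0 h0mem
      rw [hh 0] at this
      simp at this
      have h2 : deriv w 0 = (β:ℂ) := by simpa using this
      simpa [h2] using hdw 0 h0mem
    -- derivative of f on the ball
    have hdf : ∀ z ∈ ball (0:ℂ) 1,
        HasDerivAt f (c * Complex.exp (k * w z) * (k * deriv w z)) z := by
      intro z hz
      have hev : (fun t => c * Complex.exp (k * w t)) =ᶠ[nhds z] f := by
        filter_upwards [isOpen_ball.mem_nhds hz] with t ht using (hf t ht).symm
      have h1 : HasDerivAt (fun t => c * Complex.exp (k * w t))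
          (c * (Complex.exp (k * w z) * (k * deriv w z))) z :=
        (((hdw z hz).const_mul k).cexp).const_mul c
      have h2 := h1.congr_of_eventuallyEq hev.symm
      exact h2.congr_deriv (by ring)
    -- deriv f equals G on the ball
    set G : ℂ → ℂ := fun t => c * Complex.exp (k * w t) * (k * (((β:ℂ) + (α:ℂ) * (2 * t)) * (h t)⁻¹)) with hG
    have hdfG : ∀ z ∈ ball (0:ℂ) 1, deriv f z = G z := by
      intro z hz
      rw [(hdf z hz).deriv, hG]
      have := hkey z hz
      have hinv : deriv w z = ((β:ℂ) + (α:ℂ) * (2 * z)) * (h z)⁻¹ := by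
        rw [← div_eq_mul_inv, eq_div_iff (hne z hz), mul_comm]
        exact this
      rw [hinv]
    have h0one : h 0 = 1 := by rw [hh]; simp
    have hE : HasDerivAt (fun t => Complex.exp (k * w t)) (k * (β:ℂ)) 0 := by
      have := ((hdw0.const_mul k).cexp)
      simpa [hw0] using this
    have hL : HasDerivAt (fun t : ℂ => (β:ℂ) + (α:ℂ) * (2 * t)) ((α:ℂ) * 2) 0 := by
      have := (((hasDerivAt_id (0:ℂ)).const_mul (2:ℂ)).const_mul (α:ℂ)).const_add (β:ℂ)
      simpa using this
    have hInv : HasDerivAt (fun t => (h t)⁻¹) (-(β:ℂ)) 0 := by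
      have := (hpoly 0).inv (by rw [h0one]; exact one_ne_zero)
      exact this.congr_deriv (by simp [h0one])
    have hQ : HasDerivAt (fun t => ((β:ℂ) + (α:ℂ) * (2 * t)) * (h t)⁻¹)
        ((α:ℂ) * 2 * (h 0)⁻¹ + ((β:ℂ) + (α:ℂ) * (2 * 0)) * (-(β:ℂ))) 0 := hL.mul hInv
    have hQ' : HasDerivAt (fun t => ((β:ℂ) + (α:ℂ) * (2 * t)) * (h t)⁻¹) 0 0 := by
      convert hQ using 1
      rw [h0one]
      simp
      linear_combination hβC
    have hEQ := hE.mul hQ'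
    have hG0 : HasDerivAt G (c * k * (k * (β:ℂ) * (β:ℂ))) 0 := by
      have h2 := hEQ.const_mul (c * k)
      have hfun : G = fun t => (c * k) * (Complex.exp (k * w t) *
          (((β:ℂ) + (α:ℂ) * (2 * t)) * (h t)⁻¹)) := by
        funext t; rw [hG]; ring
      rw [hfun]
      refine h2.congr_deriv ?_
      rw [hw0, h0one]
      simp
    have hd2 : deriv (deriv f) 0 = c * k * (k * (β:ℂ) * (β:ℂ)) := by
      have hev : deriv f =ᶠ[nhds 0] G := by
        filter_upwards [isOpen_ball.mem_nhds h0mem] with t ht using hdfG t ht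
      rw [hev.deriv_eq]
      exact hG0.deriv
    have hit : iteratedDeriv 2 f 0 = c * k * (k * (β:ℂ) * (β:ℂ)) := by
      rw [iteratedDeriv_succ, iteratedDeriv_one, hd2]
    have hcpos : (0:ℝ) < 1 - p / 2 := by linarith
    have hreal2 : (2 / p) * (1 - p / 2) ^ (2 / p - 1)
        = (1 - p / 2) ^ (2 / p) * (4 / (p * (2 - p))) := by
      rw [Real.rpow_sub hcpos, Real.rpow_one]
      field_simp
      ring
    have hββ : β * β * (2 - p) = 2 * p := by
      have h1 : β * β = 2 * p / (2 - p) := by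
        rw [hβ]; exact Real.mul_self_sqrt (by positivity)
      rw [h1]; field_simp
    have hββC : (β:ℂ) * (β:ℂ) * (2 - (p:ℂ)) = 2 * (p:ℂ) := by exact_mod_cast hββ
    have hpne : (p:ℂ) ≠ 0 := by exact_mod_cast hp0.ne'
    have h2pne : (2 - (p:ℂ)) ≠ 0 := by
      have : ((2 - p : ℝ):ℂ) ≠ 0 := by exact_mod_cast hp2.ne'
      simpa using this
    rw [taylorCoeff, hit, hc, hk]
    norm_cast
    rw [Real.rpow_sub hcpos, Real.rpow_one, show (Nat.factorial 2 : ℝ) = 2 by norm_num]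
    have hβ2 : β * β = 2 * p / (2 - p) := by
      rw [hβ]; exact Real.mul_self_sqrt (by positivity)
    field_simp
    linear_combination hββ
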